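/- Suppose (L1)–(L3) hold with Λ compact, and in addition S_λ(t)x is continuous in x uniformly in λ ∈ Λ, for x in bounded subsets of X and t ∈ [0,T] for every T > 0. If λ ↦ 𝒜_λ is continuous at every point of Λ, then lim_{t→∞} sup_{λ∈Λ} ρ_X(S_λ(t)D, 𝒜_λ) = 0 (full equi-attraction, with the limit over continuous time t, not just along a sequence). -/

import Mathlib

open Filter Topology EMetric

/-- The Hausdorff semidistance `ρ(A,B) = sup_{a ∈ A} inf_{b ∈ B} d(a,b)`. -/
noncomputable def rho {X : Type*} [MetricSpace X] (A B : Set X) : ENNReal :=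
  ⨆ a ∈ A, infEdist a B

/-- A semigroup (semiflow) on a metric space `X`. -/
structure Semiflow (X : Type*) [MetricSpace X] where
  S : ℝ → X → X
  map_zero : ∀ x, S 0 x = x
  map_add : ∀ t s : ℝ, 0 ≤ t → 0 ≤ s → ∀ x, S (t + s) x = S t (S s x)
  cont : Continuous fun p : ℝ × X => S p.1 p.2

/-- `A` is the global attractor of the semigroup `σ`: a compact invariant set
attracting every bounded set in the Hausdorff semidistance. -/
def IsGlobalAttractor {X : Type*} [MetricSpace X] (σ : Semiflow X) (A : Set X) : Prop :=
  IsCompact A ∧ (∀ t : ℝ, 0 ≤ t → σ.S t '' A = A) ∧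
    ∀ B : Set X, Bornology.IsBounded B →
      Tendsto (fun t : ℝ => rho (σ.S t '' B) A) atTop (𝓝 0)

/-- Membership bound for `rho`. -/
lemma infEdist_le_rho {X : Type*} [MetricSpace X] {A B : Set X} {a : X} (ha : a ∈ A) :
    infEdist a B ≤ rho A B := by unfold rho; exact le_biSup (fun a => infEdist a B) ha

/-- A covering lemma: given the standing hypotheses, for every `c > 0` there is a finite
family of (positive) times together with neighbourhoods covering `Λ`, so that each
parameter `l` has some time `T p` at which `S_l(T p)` maps `B` into the closed
`c`-neighbourhood of `𝒜 l`. -/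
lemma cover_aux {Λ X : Type*} [MetricSpace Λ] [CompactSpace Λ] [MetricSpace X]
    (S : Λ → Semiflow X) (𝒜 : Λ → Set X) (B : Set X) (hB : Bornology.IsBounded B)
    (hattr : ∀ l : Λ, Tendsto (fun t : ℝ => rho ((S l).S t '' B) (𝒜 l)) atTop (𝓝 0))
    (hL3 : ∀ t : ℝ, 0 < t → ∀ B : Set X, Bornology.IsBounded B → ∀ l₀ : Λ,
      ∀ ε : ℝ, 0 < ε → ∃ δ : ℝ, 0 < δ ∧ ∀ l : Λ, dist l l₀ < δ →
        ∀ x ∈ B, dist ((S l).S t x) ((S l₀).S t x) < ε)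
    (hcont : ∀ l₀ : Λ, Tendsto (fun l => hausdorffEdist (𝒜 l) (𝒜 l₀)) (𝓝 l₀) (𝓝 0))
    (c : ℝ) (hc : 0 < c) :
    ∃ (s : Finset Λ) (T : Λ → ℝ), (∀ p ∈ s, 0 < T p) ∧
      (∀ l : Λ, ∃ p ∈ s, ∀ x ∈ B,
        infEdist ((S l).S (T p) x) (𝒜 l) ≤ ENNReal.ofReal c) := by
  have hc3 : 0 < c / 3 := by linarith
  have hc3' : (0 : ENNReal) < ENNReal.ofReal (c / 3) := by
    simpa using ENNReal.ofReal_pos.2 hc3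
  -- for each base point, a good time and an open neighbourhood
  have key : ∀ p : Λ, ∃ (T : ℝ) (U : Set Λ), 0 < T ∧ IsOpen U ∧ p ∈ U ∧
      ∀ l ∈ U, ∀ x ∈ B, infEdist ((S l).S T x) (𝒜 l) ≤ ENNReal.ofReal c := by
    intro p
    -- attraction time for the base parameter
    obtain ⟨T₀, hT₀⟩ := (Filter.eventually_atTop).1
      ((ENNReal.tendsto_nhds_zero.1 (hattr p)) (ENNReal.ofReal (c / 3)) hc3')
    set T : ℝ := max T₀ 1 with hTdef
    have hTpos : 0 < T := lt_of_lt_of_le one_pos (le_max_right _ _)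
    have hrho : rho ((S p).S T '' B) (𝒜 p) ≤ ENNReal.ofReal (c / 3) :=
      hT₀ T (le_max_left _ _)
    obtain ⟨δ₁, hδ₁pos, hδ₁⟩ := hL3 T hTpos B hB p (c / 3) hc3
    have hEv : ∀ᶠ l in 𝓝 p, hausdorffEdist (𝒜 l) (𝒜 p) < ENNReal.ofReal (c / 3) :=
      (hcont p).eventually (gt_mem_nhds hc3')
    obtain ⟨V, hVsub, hVopen, hpV⟩ := _root_.mem_nhds_iff.1 hEv
    refine ⟨T, Metric.ball p δ₁ ∩ V, hTpos,
      (Metric.isOpen_ball).inter hVopen, ⟨Metric.mem_ball_self hδ₁pos, hpV⟩, ?_⟩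
    intro l hl x hx
    have h1 : dist ((S l).S T x) ((S p).S T x) < c / 3 :=
      hδ₁ l (by simpa [Metric.mem_ball] using hl.1) x hx
    have h2 : infEdist ((S p).S T x) (𝒜 p) ≤ ENNReal.ofReal (c / 3) :=
      le_trans (infEdist_le_rho (Set.mem_image_of_mem _ hx)) hrho
    have h3 : hausdorffEdist (𝒜 p) (𝒜 l) ≤ ENNReal.ofReal (c / 3) := by
      exact hausdorffEdist_comm.trans_le (le_of_lt (hVsub hl.2))
    calc infEdist ((S l).S T x) (𝒜 l)
        ≤ infEdist ((S l).S T x) (𝒜 p) + hausdorffEdist (𝒜 p) (𝒜 l) :=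
          infEdist_le_infEdist_add_hausdorffEdist
      _ ≤ (edist ((S l).S T x) ((S p).S T x) + infEdist ((S p).S T x) (𝒜 p))
            + hausdorffEdist (𝒜 p) (𝒜 l) :=
          add_le_add_left infEdist_le_edist_add_infEdist _
      _ ≤ (ENNReal.ofReal (c / 3) + ENNReal.ofReal (c / 3)) + ENNReal.ofReal (c / 3) := by
          gcongr
          · rw [edist_dist]; exact ENNReal.ofReal_le_ofReal h1.le
      _ = ENNReal.ofReal c := by
          rw [← ENNReal.ofReal_add hc3.le hc3.le, ← ENNReal.ofReal_add (by linarith) hc3.le]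
          ring_nf
  choose T U hTpos hUopen hpU hprop using key
  obtain ⟨s, hs⟩ := isCompact_univ.elim_finite_subcover U hUopen
    (fun l _ => Set.mem_iUnion.2 ⟨l, hpU l⟩)
  refine ⟨s, T, fun p _ => hTpos p, fun l => ?_⟩
  obtain ⟨p, hp, hlp⟩ := Set.mem_iUnion₂.1 (hs (Set.mem_univ l))
  exact ⟨p, hp, hprop p l hlp⟩

/-- Iteration lemma: if `S(N)` maps `B` into the closed `c`-neighbourhood of `A`,
and that neighbourhood is contained in `B`, then so does `S(n·N)` for every `n ≥ 1`,
and `S(n·N)` maps `B` into `B` for every `n`. -/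
lemma iterate_aux {X : Type*} [MetricSpace X] (σ : Semiflow X) (A B : Set X) (c : ℝ)
    (hAB : ∀ z : X, infEdist z A ≤ ENNReal.ofReal c → z ∈ B)
    (N : ℝ) (hN : 0 < N)
    (h1 : ∀ x ∈ B, infEdist (σ.S N x) A ≤ ENNReal.ofReal c) :
    ∀ n : ℕ, ∀ x ∈ B, σ.S ((n : ℝ) * N) x ∈ B ∧
      (1 ≤ n → infEdist (σ.S ((n : ℝ) * N) x) A ≤ ENNReal.ofReal c) := by
  intro n
  induction n with
  | zero => intro x hx; simp [σ.map_zero, hx]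
  | succ n ih =>
      intro x hx
      have hdecomp : σ.S (((n : ℝ) + 1) * N) x = σ.S N (σ.S ((n : ℝ) * N) x) := by
        have : ((n : ℝ) + 1) * N = N + (n : ℝ) * N := by ring
        rw [this, σ.map_add N ((n : ℝ) * N) hN.le (by positivity)]
      have hyB : σ.S ((n : ℝ) * N) x ∈ B := (ih x hx).1
      have hle : infEdist (σ.S (((n : ℝ) + 1) * N) x) A ≤ ENNReal.ofReal c := by
        rw [hdecomp]; exact h1 _ hyB
      constructor
      · push_cast
        exact hAB _ (by push_cast at hle ⊢; exact hle)
      · intro _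
        push_cast
        exact_mod_cast hle

/-- Full equi-attraction: under (L1)–(L3) with `Λ` compact, if in addition
`S_λ(t)x` is continuous in `x` uniformly in `λ ∈ Λ`, for `x` in bounded sets
and `t ∈ [0,T]` for every `T > 0`, then continuity of `λ ↦ 𝒜_λ` implies
`sup_λ ρ(S_λ(t)D, 𝒜_λ) → 0` as `t → ∞` (over continuous time). -/
theorem full_equi_attraction_of_continuity {Λ X : Type*} [MetricSpace Λ]
    [CompactSpace Λ] [MetricSpace X] (S : Λ → Semiflow X) (𝒜 : Λ → Set X)
    (D : Set X)
    (hL1 : ∀ l : Λ, IsGlobalAttractor (S l) (𝒜 l))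
    (hL2 : Bornology.IsBounded D ∧ ∀ l : Λ, 𝒜 l ⊆ D)
    (hL3 : ∀ t : ℝ, 0 < t → ∀ B : Set X, Bornology.IsBounded B → ∀ l₀ : Λ,
      ∀ ε : ℝ, 0 < ε → ∃ δ : ℝ, 0 < δ ∧ ∀ l : Λ, dist l l₀ < δ →
        ∀ x ∈ B, dist ((S l).S t x) ((S l₀).S t x) < ε)
    (hunif : ∀ T : ℝ, 0 < T → ∀ B : Set X, Bornology.IsBounded B →
      ∀ ε : ℝ, 0 < ε → ∃ δ : ℝ, 0 < δ ∧ ∀ x ∈ B, ∀ y ∈ B, dist x y < δ →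
        ∀ l : Λ, ∀ τ ∈ Set.Icc (0 : ℝ) T, dist ((S l).S τ x) ((S l).S τ y) < ε)
    (hcont : ∀ l₀ : Λ, Tendsto (fun l => hausdorffEdist (𝒜 l) (𝒜 l₀)) (𝓝 l₀) (𝓝 0)) :
    Tendsto (fun t : ℝ => ⨆ l : Λ, rho ((S l).S t '' D) (𝒜 l)) atTop (𝓝 0) := by
  classical
  -- trivial cases
  rcases isEmpty_or_nonempty Λ with hΛ | hΛ
  · simpa [iSup_of_empty] using tendsto_const_nhds
  rcases D.eq_empty_or_nonempty with hD | hD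
  · have : ∀ t : ℝ, (⨆ l : Λ, rho ((S l).S t '' D) (𝒜 l)) = 0 := by
      intro t; simp [hD, rho]
    simpa [this] using tendsto_const_nhds
  -- each attractor is nonempty
  have hAne : ∀ l : Λ, (𝒜 l).Nonempty := by
    intro l
    by_contra hne
    rw [Set.not_nonempty_iff_eq_empty] at hne
    have hattr := (hL1 l).2.2 D hL2.1
    have hcon : ∀ t : ℝ, rho ((S l).S t '' D) (𝒜 l) = ⊤ := by
      intro t
      rw [hne]
      refine top_le_iff.1 ?_
      obtain ⟨x₀, hx₀⟩ := hD
      calc (⊤ : ENNReal) = infEdist ((S l).S t x₀) ∅ := infEdist_empty.symm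
        _ ≤ rho ((S l).S t '' D) ∅ := infEdist_le_rho (Set.mem_image_of_mem _ hx₀)
    have hattr' : Tendsto (fun _ : ℝ => (⊤ : ENNReal)) atTop (𝓝 0) := by
      have heq : (fun t : ℝ => rho ((S l).S t '' D) (𝒜 l)) = fun _ => (⊤ : ENNReal) :=
        funext hcon
      rwa [heq] at hattr
    have h2 := ENNReal.tendsto_nhds_zero.1 hattr' 1 one_pos
    obtain ⟨t, ht⟩ := (Filter.eventually_atTop).1 h2
    simpa using ht t le_rfl
  -- the bounded container B
  set B : Set X := Metric.cthickening 1 D with hBdef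
  have hBbdd : Bornology.IsBounded B := hL2.1.cthickening
  have hDB : D ⊆ B := Metric.self_subset_cthickening D
  have hAinB : ∀ l : Λ, 𝒜 l ⊆ B := fun l => (hL2.2 l).trans hDB
  -- points near an attractor lie in B
  have hnearB : ∀ (l : Λ) (z : X) (c : ℝ), c ≤ 1 →
      infEdist z (𝒜 l) ≤ ENNReal.ofReal c → z ∈ B := by
    intro l z c hc1 hz
    rw [hBdef, Metric.mem_cthickening_iff]
    calc infEdist z D ≤ infEdist z (𝒜 l) := infEdist_anti (hL2.2 l)
      _ ≤ ENNReal.ofReal c := hz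
      _ ≤ ENNReal.ofReal 1 := ENNReal.ofReal_le_ofReal hc1
  have hattrB : ∀ l : Λ, Tendsto (fun t : ℝ => rho ((S l).S t '' B) (𝒜 l)) atTop (𝓝 0) :=
    fun l => (hL1 l).2.2 B hBbdd
  -- main estimate
  rw [ENNReal.tendsto_nhds_zero]
  intro ε hε
  obtain ⟨ε', hε'pos, hε'le⟩ : ∃ ε' : ℝ, 0 < ε' ∧ ENNReal.ofReal ε' ≤ ε := by
    rcases eq_or_ne ε ⊤ with h | h
    · exact ⟨1, one_pos, by simp [h]⟩
    · exact ⟨ε.toReal, ENNReal.toReal_pos hε.ne' h, by rw [ENNReal.ofReal_toReal h]⟩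
  -- coarse cover, at scale 1
  obtain ⟨s₁, T₁, hT₁pos, hcov₁⟩ := cover_aux S 𝒜 B hBbdd hattrB hL3 hcont 1 one_pos
  have hs₁ne : s₁.Nonempty := by
    obtain ⟨p, hp, -⟩ := hcov₁ (Classical.arbitrary Λ); exact ⟨p, hp⟩
  set H₁ : ℝ := s₁.sup' hs₁ne T₁ with hH₁def
  have hH₁pos : 0 < H₁ := by
    obtain ⟨p, hp⟩ := hs₁ne
    exact lt_of_lt_of_le (hT₁pos p hp) (Finset.le_sup' T₁ hp)
  -- the uniform-continuity modulus on horizon H₁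
  obtain ⟨δh, hδhpos, hδh⟩ := hunif H₁ hH₁pos B hBbdd ε' hε'pos
  set c₂ : ℝ := min (δh / 2) 1 with hc₂def
  have hc₂pos : 0 < c₂ := lt_min (by linarith) one_pos
  have hc₂le1 : c₂ ≤ 1 := min_le_right _ _
  have hc₂lt : c₂ < δh := lt_of_le_of_lt (min_le_left _ _) (by linarith)
  -- fine cover, at scale c₂
  obtain ⟨s₂, T₂, hT₂pos, hcov₂⟩ := cover_aux S 𝒜 B hBbdd hattrB hL3 hcont c₂ hc₂pos
  have hs₂ne : s₂.Nonempty := by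
    obtain ⟨q, hq, -⟩ := hcov₂ (Classical.arbitrary Λ); exact ⟨q, hq⟩
  set Tstar : ℝ := s₂.sup' hs₂ne T₂ with hTstardef
  -- eventually for t ≥ Tstar
  filter_upwards [Filter.eventually_ge_atTop Tstar] with t ht
  refine le_trans (iSup_le fun l => ?_) hε'le
  -- fix the parameter l; get its coarse and fine data
  obtain ⟨p, hp, hcoarse⟩ := hcov₁ l
  obtain ⟨q, hq, hfine⟩ := hcov₂ l
  set N : ℝ := T₁ p with hNdef
  set M : ℝ := T₂ q with hMdef
  have hNpos : 0 < N := hT₁pos p hp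
  have hMpos : 0 < M := hT₂pos q hq
  have hNH₁ : N ≤ H₁ := Finset.le_sup' T₁ hp
  have htM : M ≤ t := le_trans (Finset.le_sup' T₂ hq) ht
  -- decompose t = τ + (M + m * N)
  set m : ℕ := ⌊(t - M) / N⌋₊ with hmdef
  have hmN_le : (m : ℝ) * N ≤ t - M := by
    have h1 : (m : ℝ) ≤ (t - M) / N := Nat.floor_le (div_nonneg (by linarith) hNpos.le)
    calc (m : ℝ) * N ≤ ((t - M) / N) * N := by gcongr
      _ = t - M := div_mul_cancel₀ _ hNpos.ne'
  have hlt : t - M < ((m : ℝ) + 1) * N := by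
    have h1 : (t - M) / N < (m : ℝ) + 1 := Nat.lt_floor_add_one _
    calc t - M = ((t - M) / N) * N := (div_mul_cancel₀ _ hNpos.ne').symm
      _ < ((m : ℝ) + 1) * N := by gcongr
  set τ : ℝ := t - (M + (m : ℝ) * N) with hτdef
  have hτ0 : 0 ≤ τ := by simp only [hτdef]; linarith
  have hτH₁ : τ ≤ H₁ := by
    have : τ < N := by simp only [hτdef]; nlinarith
    linarith
  -- now estimate rho for this l at time t
  rw [rho]
  refine iSup₂_le fun z hz => ?_
  obtain ⟨x, hx, rfl⟩ := hz
  have hxB : x ∈ B := hDB hx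
  -- iterate the coarse cover
  have hiter := iterate_aux (S l) (𝒜 l) B 1 (fun z hz => hnearB l z 1 le_rfl hz) N hNpos
    (fun x hx => hcoarse x hx) m x hxB
  have hyB : (S l).S ((m : ℝ) * N) x ∈ B := hiter.1
  -- apply the fine cover
  set y : X := (S l).S ((m : ℝ) * N) x with hydef
  set z : X := (S l).S M y with hzdef
  have hzclose : infEdist z (𝒜 l) ≤ ENNReal.ofReal c₂ := hfine y hyB
  have hzB : z ∈ B := hnearB l z c₂ hc₂le1 hzclose
  -- find a nearby attractor point
  obtain ⟨a, haA, hdista⟩ := (hL1 l).1.exists_infDist_eq_dist (hAne l) z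
  have hdza : dist z a < δh := by
    rw [← hdista]
    have h1 : Metric.infDist z (𝒜 l) ≤ c₂ := by
      rw [Metric.infDist]
      calc (infEdist z (𝒜 l)).toReal ≤ (ENNReal.ofReal c₂).toReal :=
          ENNReal.toReal_mono ENNReal.ofReal_ne_top hzclose
        _ = c₂ := ENNReal.toReal_ofReal hc₂pos.le
    linarith
  have haB : a ∈ B := hAinB l haA
  -- uniform continuity along [0, H₁]
  have hkey : dist ((S l).S τ z) ((S l).S τ a) < ε' :=
    hδh z hzB a haB hdza l τ ⟨hτ0, hτH₁⟩
  have hSa : (S l).S τ a ∈ 𝒜 l := by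
    rw [← (hL1 l).2.1 τ hτ0]
    exact Set.mem_image_of_mem _ haA
  -- decompose the flow at time t
  have hdecomp : (S l).S t x = (S l).S τ z := by
    have h1 : t = τ + (M + (m : ℝ) * N) := by simp only [hτdef]; ring
    have hmN0 : (0 : ℝ) ≤ (m : ℝ) * N := mul_nonneg (Nat.cast_nonneg m) hNpos.le
    rw [h1, (S l).map_add τ (M + (m : ℝ) * N) hτ0 (add_nonneg hMpos.le hmN0),
      (S l).map_add M ((m : ℝ) * N) hMpos.le hmN0]
  rw [hdecomp]
  calc infEdist ((S l).S τ z) (𝒜 l) ≤ edist ((S l).S τ z) ((S l).S τ a) :=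
      infEdist_le_edist_of_mem hSa
    _ ≤ ENNReal.ofReal ε' := by rw [edist_dist]; exact ENNReal.ofReal_le_ofReal hkey.le
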